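/- In U_q(sl_2), with V_1 the (l+1)-dimensional irreducible module with highest weight vector v_1 and V_2 the q-boson module B_q⁻ with highest weight vector v_2 (e' v_2 = 0), the vectors E_t = ∑_{i=0}^{t} a_{t,i}(q) f^{(i)}v_1 ⊗ f^{(t−i)}v_2 for 0 ≤ t ≤ l, where a_{t,i}(q) = ∏_{0 ≤ j ≤ i−1} q^{l−t+1}/(q^{2(l−j)} − 1) and a_{t,0} = 1, satisfy Δ_B(e')(E_t) = 0. -/

import Mathlib

noncomputable section

/-- The field `ℚ(q)` of rational functions. -/
abbrev K : Type := RatFunc ℚ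

/-- The indeterminate `q`. -/
def q : K := RatFunc.X

/-- The balanced quantum integer `[k] = (q^k - q^{-k})/(q - q⁻¹)`. -/
def qint (k : ℤ) : K := (q ^ k - q ^ (-k)) / (q - q⁻¹)

/-- The coefficient `a_{t,i}(q) = ∏_{0 ≤ j ≤ i−1} q^{l−t+1}/(q^{2(l−j)} − 1)`,
with `a_{t,0} = 1`. -/
def att (l t i : ℕ) : K :=
  ∏ j ∈ Finset.range i, q ^ ((l : ℤ) - t + 1) / (q ^ (2 * ((l : ℤ) - j)) - 1)


lemma hq : q ≠ 0 := RatFunc.X_ne_zero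

lemma hpow {m n : ℕ} (h : m ≠ n) : q ^ m ≠ q ^ n := by
  intro heq
  apply h
  have : (Polynomial.X : Polynomial ℚ) ^ m = Polynomial.X ^ n := by
    apply RatFunc.algebraMap_injective ℚ
    simpa [q, map_pow, RatFunc.algebraMap_X] using heq
  have := congrArg Polynomial.natDegree this
  simpa [Polynomial.natDegree_X_pow] using this

lemma hsub : q - q⁻¹ ≠ 0 := by
  have h : q - q⁻¹ = (q ^ 2 - 1) / q := by field_simp [hq]
  rw [h]
  refine div_ne_zero (sub_ne_zero.2 ?_) hq
  simpa using hpow (m := 2) (n := 0) (by norm_num)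

lemma zq (m n : ℕ) : q ^ ((m:ℤ) - (n:ℤ)) = q ^ m / q ^ n := by
  rw [zpow_sub₀ hq, zpow_natCast, zpow_natCast]

lemma key (l t j : ℕ) (hjt : j < t) (ht : t ≤ l) :
    att l t (j+1) * ((q⁻¹ - q) * qint ((l:ℤ) - j) * q ^ ((l:ℤ) - 2*j)) +
    att l t j * (q ^ ((l:ℤ) - 2*j) * q ^ (1 - (t:ℤ) + (j:ℤ))) = 0 := by
  have hstep : att l t (j+1) = att l t j * (q ^ ((l:ℤ) - t + 1) / (q ^ (2 * ((l:ℤ) - j)) - 1)) := by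
    rw [att, Finset.prod_range_succ]; rfl
  rw [hstep, mul_assoc, ← mul_add]
  rw [mul_eq_zero]; right
  have e1 : (l:ℤ) - t + 1 = ((l+1:ℕ):ℤ) - (t:ℤ) := by push_cast; ring
  have e2 : 2*((l:ℤ) - j) = ((2*l:ℕ):ℤ) - ((2*j:ℕ):ℤ) := by push_cast; ring
  have e3 : (l:ℤ) - 2*(j:ℤ) = ((l:ℕ):ℤ) - ((2*j:ℕ):ℤ) := by push_cast; ring
  have e4 : (1:ℤ) - (t:ℤ) + (j:ℤ) = ((j+1:ℕ):ℤ) - ((t:ℕ):ℤ) := by push_cast; ring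
  have e5 : -((l:ℤ) - (j:ℤ)) = ((j:ℕ):ℤ) - ((l:ℕ):ℤ) := by push_cast; ring
  rw [qint, e1, e2, e3, e4, e5]
  simp only [zq]
  rw [div_sub_one (pow_ne_zero _ hq)]
  have hDne : q ^ (2*l) - q ^ (2*j) ≠ 0 := sub_ne_zero.2 (hpow (by omega))
  have hqq : (q⁻¹ - q) * ((q^l/q^j - q^j/q^l)/(q - q⁻¹)) = -(q^l/q^j - q^j/q^l) := by
    rw [show q⁻¹ - q = -(q - q⁻¹) by ring, neg_mul, ← mul_div_assoc,
      mul_div_cancel_left₀ _ hsub]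
  have hB : q^l/q^j - q^j/q^l = (q^(2*l) - q^(2*j))/(q^j*q^l) := by
    rw [div_sub_div _ _ (pow_ne_zero _ hq) (pow_ne_zero _ hq)]
    congr 1 <;> ring
  rw [hqq, hB]
  generalize hA : q^(2*l) - q^(2*j) = A at hDne ⊢
  field_simp [hDne, hq]
  ring

/-- The vector `E_t = ∑_{i=0}^{t} a_{t,i}(q) f^{(i)}v₁ ⊗ f^{(t−i)}v₂` in `V₁ ⊗ V₂`,
where the basis vector `f^{(i)}v₁ ⊗ f^{(j)}v₂` is encoded as the finitely supported
function `single (i, j)`. -/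
def Etvec (l t : ℕ) : (ℕ × ℕ) →₀ K :=
  ∑ i ∈ Finset.range (t + 1), Finsupp.single (i, t - i) (att l t i)

/-- The action of `Δ_B(e') = (q⁻¹ − q) k e ⊗ 1 + k ⊗ e'` on `V₁ ⊗ V₂`, where on the
`(l+1)`-dimensional module `V₁`: `e f^{(i)}v₁ = [l−i+1] f^{(i−1)}v₁`, `k f^{(i)}v₁ =
q^{l−2i} f^{(i)}v₁` (with `e v₁ = 0`), and on the `q`-boson module `V₂`:
`e'(f^{(j)}v₂) = q^{1−j} f^{(j−1)}v₂` (with `e' v₂ = 0`). -/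
def deltaEp (l : ℕ) (v : (ℕ × ℕ) →₀ K) : (ℕ × ℕ) →₀ K :=
  v.sum fun p c =>
    (if p.1 = 0 then 0
      else Finsupp.single (p.1 - 1, p.2)
        (c * ((q⁻¹ - q) * qint ((l : ℤ) - p.1 + 1) * q ^ ((l : ℤ) - 2 * ((p.1 : ℤ) - 1)))))
    +
    (if p.2 = 0 then 0
      else Finsupp.single (p.1, p.2 - 1)
        (c * (q ^ ((l : ℤ) - 2 * (p.1 : ℤ)) * q ^ (1 - (p.2 : ℤ)))))


def gfun (l : ℕ) : ℕ × ℕ → K → ((ℕ × ℕ) →₀ K) := fun p c =>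
    (if p.1 = 0 then 0
      else Finsupp.single (p.1 - 1, p.2)
        (c * ((q⁻¹ - q) * qint ((l : ℤ) - p.1 + 1) * q ^ ((l : ℤ) - 2 * ((p.1 : ℤ) - 1)))))
    +
    (if p.2 = 0 then 0
      else Finsupp.single (p.1, p.2 - 1)
        (c * (q ^ ((l : ℤ) - 2 * (p.1 : ℤ)) * q ^ (1 - (p.2 : ℤ)))))

lemma deltaEp_eq (l : ℕ) (v : (ℕ × ℕ) →₀ K) : deltaEp l v = v.sum (gfun l) := rfl

lemma g0 (l : ℕ) (p : ℕ × ℕ) : gfun l p 0 = 0 := by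
  simp [gfun]

lemma gadd (l : ℕ) (p : ℕ × ℕ) (x y : K) : gfun l p (x + y) = gfun l p x + gfun l p y := by
  by_cases h1 : p.1 = 0 <;> by_cases h2 : p.2 = 0 <;>
    simp [gfun, h1, h2, add_mul, Finsupp.single_add] <;> abel

/-- The vectors `E_t` (for `0 ≤ t ≤ l`) are highest weight vectors for the `q`-boson
module structure on `V₁ ⊗ V₂`: `Δ_B(e')(E_t) = 0`. -/
theorem deltaEp_Etvec (l t : ℕ) (ht : t ≤ l) : deltaEp l (Etvec l t) = 0 := by
  rw [deltaEp_eq]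
  unfold Etvec
  rw [← Finsupp.sum_finsetSum_index (g0 l) (gadd l)]
  rw [Finset.sum_congr rfl (fun i _ => Finsupp.sum_single_index (g0 l (i, t - i)))]
  unfold gfun
  rw [Finset.sum_add_distrib, Finset.sum_range_succ', Finset.sum_range_succ]
  rw [if_pos (rfl : (0:ℕ) = 0), if_pos (Nat.sub_self t), add_zero, add_zero,
    ← Finset.sum_add_distrib]
  apply Finset.sum_eq_zero
  intro j hj
  rw [Finset.mem_range] at hj
  have h1 : j + 1 ≠ 0 := Nat.succ_ne_zero j
  have h2 : t - j ≠ 0 := Nat.sub_ne_zero_of_lt hj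
  rw [if_neg h1, if_neg h2]
  have i1 : (j + 1 - 1, t - (j + 1)) = (j, t - j - 1) := by
    simp [Nat.sub_sub]
  have c1 : (l:ℤ) - (((j+1:ℕ)):ℤ) + 1 = (l:ℤ) - j := by push_cast; ring
  have c2 : (l:ℤ) - 2 * ((((j+1:ℕ)):ℤ) - 1) = (l:ℤ) - 2*(j:ℤ) := by push_cast; ring
  have c3 : (1:ℤ) - (((t - j : ℕ)):ℤ) = 1 - (t:ℤ) + (j:ℤ) := by
    rw [Nat.cast_sub hj.le]; ring
  rw [i1, c1, c2, c3, ← Finsupp.single_add, key l t j hj ht, Finsupp.single_zero]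

end
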